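/- Let Z ~ Bin(n, p) and ε ∈ [0,1]. Then E[exp(-2ε²·Z)·1{Z > 0}] ≤ exp(-n·p·ε²/2). -/

import Mathlib

theorem stmt_4 (n : ℕ) (p ε : ℝ) (hp0 : 0 ≤ p) (hp1 : p ≤ 1)
    (hε0 : 0 ≤ ε) (hε1 : ε ≤ 1) :
    ∑ k ∈ Finset.range (n + 1),
        (n.choose k : ℝ) * p ^ k * (1 - p) ^ (n - k) *
          (Real.exp (-2 * ε ^ 2 * k) * (if 0 < k then 1 else 0))
      ≤ Real.exp (-(n : ℝ) * p * ε ^ 2 / 2) := by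
  set t : ℝ := Real.exp (-2 * ε ^ 2) with ht
  have ht0 : 0 < t := Real.exp_pos _
  have hε2 : ε ^ 2 ≤ 1 := by nlinarith
  have ht1 : t ≤ 1 - ε ^ 2 / 2 := by
    have h1 : 2 * ε ^ 2 + 1 ≤ Real.exp (2 * ε ^ 2) := Real.add_one_le_exp _
    have h2 : t * Real.exp (2 * ε ^ 2) = 1 := by
      rw [ht, ← Real.exp_add]; norm_num
    nlinarith [sq_nonneg ε, mul_nonneg (le_of_lt ht0) (sq_nonneg ε)]
  have hq : 1 - p ≥ 0 := by linarith
  -- drop the indicator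
  have step1 : ∑ k ∈ Finset.range (n + 1),
        (n.choose k : ℝ) * p ^ k * (1 - p) ^ (n - k) *
          (Real.exp (-2 * ε ^ 2 * k) * (if 0 < k then 1 else 0))
      ≤ ∑ k ∈ Finset.range (n + 1),
        (p * t) ^ k * (1 - p) ^ (n - k) * (n.choose k : ℝ) := by
    apply Finset.sum_le_sum
    intro k _
    have hek : Real.exp (-2 * ε ^ 2 * k) = t ^ k := by
      rw [ht, ← Real.exp_nat_mul]; ring_nf
    rw [hek, mul_pow]
    have hind : (if 0 < k then (1:ℝ) else 0) ≤ 1 := by split <;> norm_num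
    have hnn : (0:ℝ) ≤ (n.choose k : ℝ) * p ^ k * (1 - p) ^ (n - k) * t ^ k :=
      by positivity
    calc (n.choose k : ℝ) * p ^ k * (1 - p) ^ (n - k) *
          (t ^ k * (if 0 < k then 1 else 0))
        ≤ (n.choose k : ℝ) * p ^ k * (1 - p) ^ (n - k) * (t ^ k * 1) := by
          apply mul_le_mul_of_nonneg_left _ (by positivity)
          exact mul_le_mul_of_nonneg_left hind (by positivity)
      _ = p ^ k * t ^ k * (1 - p) ^ (n - k) * (n.choose k : ℝ) := by ring
  have step2 : ∑ k ∈ Finset.range (n + 1),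
        (p * t) ^ k * (1 - p) ^ (n - k) * (n.choose k : ℝ)
      = (p * t + (1 - p)) ^ n := (add_pow (p * t) (1 - p) n).symm
  have hbase0 : 0 ≤ p * t + (1 - p) := by positivity
  have hbase : p * t + (1 - p) ≤ Real.exp (-(p * ε ^ 2 / 2)) := by
    have h3 : -(p * ε ^ 2 / 2) + 1 ≤ Real.exp (-(p * ε ^ 2 / 2)) :=
      Real.add_one_le_exp _
    nlinarith [mul_le_mul_of_nonneg_left ht1 hp0]
  calc ∑ k ∈ Finset.range (n + 1),
        (n.choose k : ℝ) * p ^ k * (1 - p) ^ (n - k) *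
          (Real.exp (-2 * ε ^ 2 * k) * (if 0 < k then 1 else 0))
      ≤ (p * t + (1 - p)) ^ n := step2 ▸ step1
    _ ≤ (Real.exp (-(p * ε ^ 2 / 2))) ^ n := pow_le_pow_left₀ hbase0 hbase n
    _ = Real.exp (-(n : ℝ) * p * ε ^ 2 / 2) := by
        rw [← Real.exp_nat_mul]; ring_nf
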